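/- (Objective value violations.) Let x* ∈ X be an optimal solution of min{ f(x) : g_k(x) ≤ 0 ∀k, x ∈ X }, let λ* ≥ 0 (componentwise) satisfy inf_{x ∈ X}( f(x) + Σ_k λ*_k g_k(x) ) = f(x*), and set D = β² + L_f + 2‖λ*‖‖L_g‖ + 2C‖L_g‖. If the step size γ > 0 satisfies D + ‖L_g‖·R/√γ − 1/γ ≤ 0, then for every t ≥ 1 the running average x̄(t) = (1/t) Σ_{τ=0}^{t−1} x(τ) satisfies f(x̄(t)) ≤ f(x*) + (1/t)·R²/(2γ). -/

import Mathlib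

set_option maxHeartbeats 1600000

open InnerProductSpace Set Finset

section Aux
variable {E : Type*} [NormedAddCommGroup E] [InnerProductSpace ℝ E] [CompleteSpace E]

local notation "⟪" x ", " y "⟫" => @inner ℝ _ _ x y

lemma line_hasDerivAt (φ : E → ℝ) (Gφ : E → E) (hφ : ∀ z, HasGradientAt φ (Gφ z) z)
    (a v : E) (s : ℝ) :
    HasDerivAt (fun s : ℝ => φ (a + s • v)) ⟪Gφ (a + s • v), v⟫ s := by
  have hc : HasDerivAt (fun s : ℝ => a + s • v) v s := by
    simpa using ((hasDerivAt_id s).smul_const v).const_add a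
  have h := (hφ (a + s • v)).hasFDerivAt
  have := (h.comp_hasDerivAt s hc)
  exact this

lemma grad_convex_ineq {X : Set E} (hφ : ConvexOn ℝ X φ') {Gφ : E → E}
    (hφd : ∀ z, HasGradientAt φ' (Gφ z) z) {a b : E} (ha : a ∈ X) (hb : b ∈ X) :
    φ' a + ⟪Gφ a, b - a⟫ ≤ φ' b := by
  set v := b - a with hv
  have hder : HasDerivAt (fun s : ℝ => φ' (a + s • v)) ⟪Gφ a, v⟫ 0 := by
    have := line_hasDerivAt φ' Gφ hφd a v 0
    simpa using this
  have htend : Filter.Tendsto (slope (fun s : ℝ => φ' (a + s • v)) 0)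
      (nhdsWithin 0 (Set.Ioi 0)) (nhds ⟪Gφ a, v⟫) := by
    have := hasDerivAt_iff_tendsto_slope.1 hder
    exact this.mono_left (nhdsWithin_mono 0 (fun y hy => ne_of_gt hy))
  have hev : ∀ᶠ s in nhdsWithin (0:ℝ) (Set.Ioi 0),
      slope (fun s : ℝ => φ' (a + s • v)) 0 s ≤ φ' b - φ' a := by
    filter_upwards [Ioc_mem_nhdsGT_of_mem (Set.left_mem_Ico.2 zero_lt_one)] with s hs
    obtain ⟨hs0, hs1⟩ := hs
    have hcomb : a + s • v = (1 - s) • a + s • b := by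
      rw [hv]; module
    have hcvx := hφ.2 ha hb (by linarith : (0:ℝ) ≤ 1 - s) hs0.le (by ring)
    simp only [smul_eq_mul] at hcvx
    rw [slope_def_field, sub_zero, div_le_iff₀ hs0]
    simp only [zero_smul, add_zero, hcomb]
    nlinarith [hcvx]
  have hfin : ⟪Gφ a, v⟫ ≤ φ' b - φ' a := le_of_tendsto htend hev
  linarith [hfin]

lemma grad_descent {X : Set E} (hXcv : Convex ℝ X) {φ' : E → ℝ} {Gφ : E → E}
    (hφd : ∀ z, HasGradientAt φ' (Gφ z) z) {L : ℝ} (hL : 0 ≤ L)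
    (hLip : ∀ z ∈ X, ∀ w ∈ X, ‖Gφ z - Gφ w‖ ≤ L * ‖z - w‖)
    {a b : E} (ha : a ∈ X) (hb : b ∈ X) :
    φ' b ≤ φ' a + ⟪Gφ a, b - a⟫ + L / 2 * ‖b - a‖ ^ 2 := by
  set v := b - a with hv
  set h' : ℝ → ℝ := fun s => ⟪Gφ (a + s • v), v⟫ with hh'
  have hmem : ∀ s ∈ Set.Icc (0:ℝ) 1, a + s • v ∈ X := by
    intro s hs
    have : a + s • v = (1 - s) • a + s • b := by rw [hv]; module
    rw [this]
    exact hXcv ha hb (by linarith [hs.2]) hs.1 (by ring)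
  have hder : ∀ s ∈ Set.uIcc (0:ℝ) 1,
      HasDerivAt (fun s : ℝ => φ' (a + s • v)) (h' s) s := by
    intro s _
    exact line_hasDerivAt φ' Gφ hφd a v s
  have hlip' : ∀ s ∈ Set.Icc (0:ℝ) 1, ∀ r ∈ Set.Icc (0:ℝ) 1,
      dist (h' s) (h' r) ≤ (L * ‖v‖ ^ 2) * dist s r := by
    intro s hs r hr
    have h1 : h' s - h' r = ⟪Gφ (a + s • v) - Gφ (a + r • v), v⟫ := by
      rw [hh']; simp [inner_sub_left]
    have h2 : |h' s - h' r| ≤ ‖Gφ (a + s • v) - Gφ (a + r • v)‖ * ‖v‖ := by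
      rw [h1]; exact abs_real_inner_le_norm _ _
    have h3 : ‖Gφ (a + s • v) - Gφ (a + r • v)‖ ≤ L * (|s - r| * ‖v‖) := by
      have := hLip _ (hmem s hs) _ (hmem r hr)
      have he : (a + s • v) - (a + r • v) = (s - r) • v := by module
      rw [he, norm_smul] at this
      simpa using this
    rw [Real.dist_eq, Real.dist_eq]
    calc |h' s - h' r| ≤ ‖Gφ (a + s • v) - Gφ (a + r • v)‖ * ‖v‖ := h2
      _ ≤ (L * (|s - r| * ‖v‖)) * ‖v‖ := by
          exact mul_le_mul_of_nonneg_right h3 (norm_nonneg v)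
      _ = (L * ‖v‖ ^ 2) * |s - r| := by ring
  have contOn : ContinuousOn h' (Set.Icc (0:ℝ) 1) := by
    have hK : (0:ℝ) ≤ L * ‖v‖ ^ 2 := by positivity
    exact (LipschitzOnWith.of_dist_le_mul (K := ⟨L * ‖v‖ ^ 2, hK⟩)
      (fun x hx y hy => hlip' x hx y hy)).continuousOn
  have hint : IntervalIntegrable h' MeasureTheory.volume 0 1 := by
    apply ContinuousOn.intervalIntegrable
    rwa [Set.uIcc_of_le zero_le_one]
  have hftc : ∫ s in (0:ℝ)..1, h' s = φ' (a + (1:ℝ) • v) - φ' (a + (0:ℝ) • v) :=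
    intervalIntegral.integral_eq_sub_of_hasDerivAt hder hint
  have hpt : ∀ s ∈ Set.Icc (0:ℝ) 1, h' s ≤ ⟪Gφ a, v⟫ + (L * ‖v‖ ^ 2) * s := by
    intro s hs
    have h1 : h' s - ⟪Gφ a, v⟫ = ⟪Gφ (a + s • v) - Gφ a, v⟫ := by
      rw [hh']; simp [inner_sub_left]
    have h2 : ⟪Gφ (a + s • v) - Gφ a, v⟫ ≤ ‖Gφ (a + s • v) - Gφ a‖ * ‖v‖ :=
      real_inner_le_norm _ _
    have h3 : ‖Gφ (a + s • v) - Gφ a‖ ≤ L * (s * ‖v‖) := by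
      have := hLip _ (hmem s hs) _ ha
      have he : (a + s • v) - a = s • v := by module
      rw [he, norm_smul] at this
      simpa [abs_of_nonneg hs.1] using this
    nlinarith [norm_nonneg v, h2, h3, h1]
  have hint2 : IntervalIntegrable (fun s => ⟪Gφ a, v⟫ + (L * ‖v‖ ^ 2) * s)
      MeasureTheory.volume 0 1 := by
    apply Continuous.intervalIntegrable
    continuity
  have hmono := intervalIntegral.integral_mono_on zero_le_one hint hint2 hpt
  have hrhs : (∫ s in (0:ℝ)..1, (⟪Gφ a, v⟫ + (L * ‖v‖ ^ 2) * s))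
      = ⟪Gφ a, v⟫ + (L * ‖v‖ ^ 2) / 2 := by
    rw [intervalIntegral.integral_add intervalIntegrable_const
      (by apply Continuous.intervalIntegrable; continuity),
      intervalIntegral.integral_const, intervalIntegral.integral_const_mul, integral_id]
    norm_num
    ring
  rw [hftc] at hmono
  rw [hrhs] at hmono
  have hb' : a + (1:ℝ) • v = b := by rw [hv]; module
  have ha' : a + (0:ℝ) • v = a := by module
  rw [hb', ha'] at hmono
  linarith [hmono]

lemma proj_inner_le {X : Set E} (hXcv : Convex ℝ X) {p c y : E} (hp : p ∈ X) (hy : y ∈ X)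
    (hmin : ∀ w ∈ X, ‖p - c‖ ≤ ‖w - c‖) : ⟪c - p, y - p⟫ ≤ 0 := by
  have key : ∀ θ : ℝ, 0 < θ → θ ≤ 1 → ⟪c - p, y - p⟫ ≤ θ * ‖y - p‖ ^ 2 / 2 := by
    intro θ h0 h1
    have hz : p + θ • (y - p) ∈ X := by
      have he : p + θ • (y - p) = (1 - θ) • p + θ • y := by module
      rw [he]; exact hXcv hp hy (by linarith) h0.le (by ring)
    have h2 := hmin _ hz
    have h4 : ‖p - c‖ ^ 2 ≤ ‖p + θ • (y - p) - c‖ ^ 2 :=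
      pow_le_pow_left₀ (norm_nonneg _) h2 2
    have h3 : ‖p + θ • (y - p) - c‖ ^ 2
        = ‖p - c‖ ^ 2 + 2 * (θ * ⟪p - c, y - p⟫) + θ ^ 2 * ‖y - p‖ ^ 2 := by
      have he : p + θ • (y - p) - c = (p - c) + θ • (y - p) := by module
      rw [he, norm_add_sq_real, real_inner_smul_right, norm_smul]
      simp [abs_of_pos h0]; ring
    have h5 : ⟪p - c, y - p⟫ = -⟪c - p, y - p⟫ := by
      have he : p - c = -(c - p) := by module
      rw [he, inner_neg_left]
    rw [h3, h5] at h4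
    have h6 : 0 ≤ -(2 * θ * ⟪c - p, y - p⟫) + θ ^ 2 * ‖y - p‖ ^ 2 := by nlinarith
    nlinarith [h6, h0, sq_nonneg θ]
  by_contra hpos
  push_neg at hpos
  set K := ⟪c - p, y - p⟫ with hK
  set θ := min 1 (K / (‖y - p‖ ^ 2 + 1)) with hθ
  have hd : (0:ℝ) < ‖y - p‖ ^ 2 + 1 := by positivity
  have h0 : 0 < θ := lt_min one_pos (div_pos hpos hd)
  have h1 : θ ≤ 1 := min_le_left _ _
  have hKθ := key θ h0 h1
  have hθ3 : θ * (‖y - p‖ ^ 2 + 1) ≤ K := by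
    rw [← le_div_iff₀ hd]; exact min_le_right _ _
  nlinarith [hKθ, hθ3, h0, sq_nonneg ‖y - p‖]

lemma hasGradientAt_comb {m : ℕ} (f : E → ℝ) (Gf : E → E) (g : Fin m → E → ℝ)
    (Gg : Fin m → E → E) (c : Fin m → ℝ)
    (hfd : ∀ z, HasGradientAt f (Gf z) z)
    (hgd : ∀ k z, HasGradientAt (g k) (Gg k z) z) (z : E) :
    HasGradientAt (fun w => f w + ∑ k, c k * g k w) (Gf z + ∑ k, c k • Gg k z) z := by
  rw [hasGradientAt_iff_hasFDerivAt]
  have h1 := (hfd z).hasFDerivAt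
  have h2 : ∀ k : Fin m, HasFDerivAt (fun w => c k * g k w)
      (c k • (toDual ℝ E (Gg k z))) z := fun k => ((hgd k z).hasFDerivAt).const_mul (c k)
  have h3 := h1.add (HasFDerivAt.sum (u := Finset.univ)
    (A' := fun k => c k • toDual ℝ E (Gg k z)) (fun k _ => h2 k))
  have he : toDual ℝ E (Gf z + ∑ k, c k • Gg k z)
      = toDual ℝ E (Gf z) + ∑ k, c k • toDual ℝ E (Gg k z) := by
    rw [map_add, map_sum]
    congr 1
    apply Finset.sum_congr rfl
    intro k _
    simp
  rw [he]
  have hfun : (fun w => f w + ∑ k, c k * g k w) = f + ∑ i, fun w => c i * g i w := by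
    ext w; simp [Finset.sum_apply]
  rw [hfun]
  exact h3

end Aux

/-- The stacked constraint vector `g(x) = (g_1(x), …, g_m(x))` as an element of
Euclidean space `ℝ^m`. -/
noncomputable def gvec {n m : ℕ} (g : Fin m → EuclideanSpace ℝ (Fin n) → ℝ)
    (x : EuclideanSpace ℝ (Fin n)) : EuclideanSpace ℝ (Fin m) :=
  WithLp.toLp 2 (fun k => g k x)

/-- Objective value violations: the running average `x̄(t) = (1/t) Σ_{τ=0}^{t−1} x(τ)` satisfies `f(x̄(t)) ≤ f(x*) + (1/t)·R²/(2γ)`.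
Indexing convention: `x 0` denotes the initial point `x(−1)` and `x (t+1)`
denotes the iterate `x(t)`; thus at iteration `t` of the paper,
`x(t) = x (t+1)`, `x(t−1) = x t`, and `Q(t) = Q t`. -/
theorem objective_value_violation_bound {n m : ℕ}
    (X : Set (EuclideanSpace ℝ (Fin n)))
    (hXne : X.Nonempty) (hXcv : Convex ℝ X) (hXcp : IsCompact X)
    (R : ℝ) (hR : ∀ z ∈ X, ∀ w ∈ X, ‖z - w‖ ≤ R)
    (f : EuclideanSpace ℝ (Fin n) → ℝ)
    (Gf : EuclideanSpace ℝ (Fin n) → EuclideanSpace ℝ (Fin n))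
    (g : Fin m → EuclideanSpace ℝ (Fin n) → ℝ)
    (Gg : Fin m → EuclideanSpace ℝ (Fin n) → EuclideanSpace ℝ (Fin n))
    (Lf : ℝ) (Lg : EuclideanSpace ℝ (Fin m)) (β C : ℝ)
    (hf : ConvexOn ℝ X f)
    (hfd : ∀ z, HasGradientAt f (Gf z) z)
    (hLf : 0 ≤ Lf)
    (hGfLip : ∀ z ∈ X, ∀ w ∈ X, ‖Gf z - Gf w‖ ≤ Lf * ‖z - w‖)
    (hg : ∀ k, ConvexOn ℝ X (g k))
    (hgd : ∀ (k : Fin m) z, HasGradientAt (g k) (Gg k z) z)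
    (hLg : ∀ k, 0 ≤ Lg k)
    (hGgLip : ∀ (k : Fin m), ∀ z ∈ X, ∀ w ∈ X, ‖Gg k z - Gg k w‖ ≤ Lg k * ‖z - w‖)
    (hgLip : ∀ z ∈ X, ∀ w ∈ X, ‖gvec g z - gvec g w‖ ≤ β * ‖z - w‖)
    (hgC : ∀ z ∈ X, ‖gvec g z‖ ≤ C)
    (xstar : EuclideanSpace ℝ (Fin n)) (hxs : xstar ∈ X)
    (hxsFeas : ∀ k, g k xstar ≤ 0)
    (hxsOpt : ∀ z ∈ X, (∀ k, g k z ≤ 0) → f xstar ≤ f z)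
    (lam : EuclideanSpace ℝ (Fin m)) (hlam : ∀ k, 0 ≤ lam k)
    (hduality : IsGLB ((fun z => f z + ∑ k, lam k * g k z) '' X) (f xstar))
    (D : ℝ) (hD : D = β ^ 2 + Lf + 2 * ‖lam‖ * ‖Lg‖ + 2 * C * ‖Lg‖)
    (γ : ℝ) (hγ : 0 < γ)
    (hγcond : D + ‖Lg‖ * R / Real.sqrt γ - 1 / γ ≤ 0)
    (x : ℕ → EuclideanSpace ℝ (Fin n)) (hxX : ∀ t, x t ∈ X)
    (Q : ℕ → EuclideanSpace ℝ (Fin m))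
    (hQ0 : ∀ k, Q 0 k = max 0 (-(g k (x 0))))
    (hQr : ∀ (t : ℕ) (k : Fin m),
      Q (t + 1) k = max (-(g k (x (t + 1)))) (Q t k + g k (x (t + 1))))
    (d : ℕ → EuclideanSpace ℝ (Fin n))
    (hd : ∀ t, d t = Gf (x t) + ∑ k, (Q t k + g k (x t)) • Gg k (x t))
    (hproj : ∀ t, ∀ y ∈ X,
      ‖x (t + 1) - (x t - γ • d t)‖ ≤ ‖y - (x t - γ • d t)‖) :
    ∀ t : ℕ, 1 ≤ t →
      f ((t : ℝ)⁻¹ • ∑ τ ∈ Finset.range t, x (τ + 1)) ≤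
        f xstar + (1 / (t : ℝ)) * (R ^ 2 / (2 * γ)) := by
  classical
  obtain ⟨z0, hz0⟩ := hXne
  have hR0 : (0:ℝ) ≤ R := by have := hR z0 hz0 z0 hz0; simpa using this
  have hC0 : (0:ℝ) ≤ C := le_trans (norm_nonneg _) (hgC z0 hz0)
  have hγ2 : (0:ℝ) < 2 * γ := by linarith
  have hsγ : (0:ℝ) < Real.sqrt γ := Real.sqrt_pos.2 hγ
  have hS0 : (0:ℝ) ≤ R / Real.sqrt γ := by positivity
  have hS2 : (R / Real.sqrt γ)^2 = R^2 / γ := by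
    rw [div_pow, Real.sq_sqrt hγ.le]
  have hΛ0 : (0:ℝ) ≤ ‖lam‖ := norm_nonneg _
  set B : ℝ := 2 * ‖lam‖ + C + R / Real.sqrt γ with hB
  clear_value B
  -- componentwise queue facts
  have hQnn : ∀ t k, 0 ≤ Q t k := by
    intro t
    induction t with
    | zero =>
      intro k; rw [hQ0 k]; exact le_max_left _ _
    | succ t ih =>
      intro k
      rw [hQr t k]
      rcases le_total (g k (x (t+1))) 0 with h | h
      · exact le_max_of_le_left (by linarith)
      · exact le_max_of_le_right (by have := ih k; linarith)
  have hcnn : ∀ t k, 0 ≤ Q t k + g k (x t) := by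
    intro t k
    cases t with
    | zero =>
      have h := le_max_right (0:ℝ) (-(g k (x 0)))
      rw [hQ0 k]; linarith
    | succ t =>
      have h := le_max_left (-(g k (x (t+1)))) (Q t k + g k (x (t+1)))
      rw [hQr t k]; linarith
  have hQgrow : ∀ t k, Q t k + g k (x (t+1)) ≤ Q (t+1) k := by
    intro t k; rw [hQr t k]; exact le_max_right _ _
  have hQabs : ∀ t k, |g k (x (t+1))| ≤ Q (t+1) k := by
    intro t k
    have h1 := le_max_left (-(g k (x (t+1)))) (Q t k + g k (x (t+1)))
    have h2 := le_max_right (-(g k (x (t+1)))) (Q t k + g k (x (t+1)))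
    have h3 := hQnn t k
    rw [hQr t k, abs_le]
    constructor <;> linarith
  have hQ0abs : ∀ k, Q 0 k ≤ |g k (x 0)| := by
    intro k; rw [hQ0 k]
    exact max_le (abs_nonneg _) (neg_le_abs _)
  -- norm identities
  have hnQ : ∀ t, ‖Q t‖^2 = ∑ k, Q t k ^ 2 := by
    intro t
    rw [EuclideanSpace.norm_eq, Real.sq_sqrt (by positivity)]
    simp [sq_abs]
  have hng : ∀ z, ‖gvec g z‖^2 = ∑ k, g k z ^ 2 := by
    intro z
    rw [EuclideanSpace.norm_eq, Real.sq_sqrt (by positivity)]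
    simp [gvec, sq_abs]
  have hF0G0 : ‖Q 0‖^2 ≤ ‖gvec g (x 0)‖^2 := by
    rw [hnQ, hng]
    apply Finset.sum_le_sum
    intro k _
    have h1 := hQ0abs k
    have h2 := hQnn 0 k
    have h3 := abs_nonneg (g k (x 0))
    nlinarith [sq_abs (g k (x 0))]
  have hFtGt : ∀ t, ‖gvec g (x (t+1))‖^2 ≤ ‖Q (t+1)‖^2 := by
    intro t
    rw [hnQ, hng]
    apply Finset.sum_le_sum
    intro k _
    have h1 := hQabs t k
    have h2 := abs_nonneg (g k (x (t+1)))
    nlinarith [sq_abs (g k (x (t+1)))]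
  -- drift inequality
  have hdrift : ∀ t, ‖Q (t+1)‖^2/2 - ‖Q t‖^2/2 ≤
      (∑ k, Q t k * g k (x (t+1))) + ‖gvec g (x (t+1))‖^2 := by
    intro t
    have comp : ∀ k : Fin m, Q (t+1) k ^ 2 / 2 - Q t k ^ 2 / 2 ≤
        Q t k * g k (x (t+1)) + g k (x (t+1))^2 := by
      intro k
      rw [hQr t k]
      rcases max_cases (-(g k (x (t+1)))) (Q t k + g k (x (t+1))) with ⟨he, hc⟩ | ⟨he, hc⟩ <;>
        rw [he] <;> nlinarith [hQnn t k, sq_nonneg (Q t k + g k (x (t+1)))]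
    have hs := Finset.sum_le_sum (fun k (_ : k ∈ Finset.univ) => comp k)
    rw [Finset.sum_sub_distrib, Finset.sum_add_distrib, ← Finset.sum_div, ← Finset.sum_div] at hs
    rw [hnQ, hnQ, hng]
    linarith
  -- inner product of consecutive constraint vectors
  have hgdot : ∀ a b : EuclideanSpace ℝ (Fin n), (∑ k, g k a * g k b) =
      (‖gvec g a‖^2 + ‖gvec g b‖^2 - ‖gvec g b - gvec g a‖^2)/2 := by
    intro a b
    have h1 : (inner ℝ (gvec g a) (gvec g b) : ℝ) = ∑ k, g k a * g k b := by
      simp [PiLp.inner_apply, RCLike.inner_apply, gvec, mul_comm]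
    have h2 : ‖gvec g b - gvec g a‖^2 =
        ‖gvec g b‖^2 - 2 * (inner ℝ (gvec g b) (gvec g a) : ℝ) + ‖gvec g a‖^2 := by
      rw [norm_sub_sq_real]
    rw [real_inner_comm] at h2
    linarith
  -- Cauchy–Schwarz bound on the Lipschitz combination
  have hCS : ∀ t, (∑ k, (Q t k + g k (x t)) * Lg k) ≤ (‖Q t‖ + C) * ‖Lg‖ := by
    intro t
    have h1 : (∑ k, (Q t k + g k (x t)) * Lg k) = (inner ℝ (Q t + gvec g (x t)) Lg : ℝ) := by
      simp [PiLp.inner_apply, RCLike.inner_apply, gvec, mul_comm]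
    have h2 : (inner ℝ (Q t + gvec g (x t)) Lg : ℝ) ≤ ‖Q t + gvec g (x t)‖ * ‖Lg‖ :=
      real_inner_le_norm _ _
    have h3 : ‖Q t + gvec g (x t)‖ ≤ ‖Q t‖ + C := by
      refine (norm_add_le _ _).trans ?_
      have := hgC (x t) (hxX t)
      linarith
    rw [h1]
    exact h2.trans (mul_le_mul_of_nonneg_right h3 (norm_nonneg _))
  -- KEY per-iteration inequality
  have key : ∀ t, ‖Q t‖ ≤ B → ∀ y ∈ X,
      ‖Q (t+1)‖^2/2 - ‖Q t‖^2/2 + f (x (t+1)) ≤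
        f y + (∑ k, (Q t k + g k (x t)) * g k y)
        + (‖y - x t‖^2 - ‖y - x (t+1)‖^2)/(2*γ)
        + ‖gvec g (x (t+1))‖^2/2 - ‖gvec g (x t)‖^2/2 := by
    intro t hQB y hy
    have hat : x t ∈ X := hxX t
    have hbt : x (t+1) ∈ X := hxX (t+1)
    set c : Fin m → ℝ := fun k => Q t k + g k (x t) with hc
    set φ : EuclideanSpace ℝ (Fin n) → ℝ := fun w => f w + ∑ k, c k * g k w with hφ
    set Gφ : EuclideanSpace ℝ (Fin n) → EuclideanSpace ℝ (Fin n) :=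
      fun z => Gf z + ∑ k, c k • Gg k z with hGφ
    have hφd : ∀ z, HasGradientAt φ (Gφ z) z := fun z =>
      hasGradientAt_comb f Gf g Gg c hfd hgd z
    have hcnn' : ∀ k, 0 ≤ c k := fun k => hcnn t k
    have hφcv : ConvexOn ℝ X φ := by
      have hsumcv : ∀ s : Finset (Fin m), ConvexOn ℝ X (fun w => ∑ k ∈ s, c k * g k w) := by
        intro s
        induction s using Finset.induction_on with
        | empty => simpa using convexOn_const (0:ℝ) hXcv
        | @insert a s hnot ih =>
          have hterm : ConvexOn ℝ X (fun w => c a * g a w) := by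
            have := ((hg a).smul (hcnn' a))
            simpa [smul_eq_mul] using this
          have hadd := hterm.add ih
          have hee : (fun w => c a * g a w + ∑ k ∈ s, c k * g k w)
              = (fun w => ∑ k ∈ insert a s, c k * g k w) := by
            funext w; rw [Finset.sum_insert hnot]
          rw [← hee]
          exact hadd
      exact hf.add (hsumcv Finset.univ)
    set Lt : ℝ := Lf + ∑ k, c k * Lg k with hLt
    have hLtnn : 0 ≤ Lt :=
      add_nonneg hLf (Finset.sum_nonneg fun k _ => mul_nonneg (hcnn' k) (hLg k))
    have hφLip : ∀ z ∈ X, ∀ w ∈ X, ‖Gφ z - Gφ w‖ ≤ Lt * ‖z - w‖ := by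
      intro z hz w hw
      have he : Gφ z - Gφ w = (Gf z - Gf w) + ∑ k, c k • (Gg k z - Gg k w) := by
        rw [hGφ]
        simp only [smul_sub, Finset.sum_sub_distrib]
        abel
      rw [he]
      have h1 : ‖(Gf z - Gf w) + ∑ k, c k • (Gg k z - Gg k w)‖ ≤
          ‖Gf z - Gf w‖ + ∑ k, ‖c k • (Gg k z - Gg k w)‖ :=
        (norm_add_le _ _).trans (by gcongr; exact norm_sum_le _ _)
      have h2 : ∀ k : Fin m, ‖c k • (Gg k z - Gg k w)‖ ≤ c k * (Lg k * ‖z - w‖) := by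
        intro k
        rw [norm_smul, Real.norm_eq_abs, abs_of_nonneg (hcnn' k)]
        exact mul_le_mul_of_nonneg_left (hGgLip k z hz w hw) (hcnn' k)
      have h3 := Finset.sum_le_sum (fun k (_ : k ∈ Finset.univ) => h2 k)
      have h4 : (∑ k, c k * (Lg k * ‖z - w‖)) = (∑ k, c k * Lg k) * ‖z - w‖ := by
        rw [Finset.sum_mul]
        exact Finset.sum_congr rfl fun k _ => by ring
      have h5 := hGfLip z hz w hw
      calc ‖(Gf z - Gf w) + ∑ k, c k • (Gg k z - Gg k w)‖
          ≤ ‖Gf z - Gf w‖ + ∑ k, ‖c k • (Gg k z - Gg k w)‖ := h1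
        _ ≤ Lf * ‖z - w‖ + (∑ k, c k * Lg k) * ‖z - w‖ := by rw [← h4]; exact add_le_add h5 h3
        _ = Lt * ‖z - w‖ := by rw [hLt]; ring
    have hdt : d t = Gφ (x t) := by rw [hd t, hGφ]
    have hφb : φ (x (t+1)) = f (x (t+1)) + (∑ k, Q t k * g k (x (t+1)))
        + (∑ k, g k (x t) * g k (x (t+1))) := by
      rw [hφ]
      simp only []
      rw [add_assoc, ← Finset.sum_add_distrib]
      congr 1
      exact Finset.sum_congr rfl fun k _ => by rw [hc]; ring
    have hφy : φ y = f y + ∑ k, (Q t k + g k (x t)) * g k y := by rw [hφ]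
    have hCSc : (∑ k, c k * Lg k) ≤ (‖Q t‖ + C) * ‖Lg‖ := hCS t
    clear_value c φ Gφ Lt
    have hdesc := grad_descent hXcv hφd hLtnn hφLip hat hbt
    have hconv := grad_convex_ineq hφcv hφd hat hy
    -- projection inequality
    have hpj := proj_inner_le hXcv hbt hy (fun w hw => hproj t w hw)
    have hsplit1 : (x t - γ • d t) - x (t+1) = (x t - x (t+1)) - γ • d t := by module
    rw [hsplit1, inner_sub_left, real_inner_smul_left] at hpj
    have hpol : ‖y - x t‖^2 = ‖y - x (t+1)‖^2
        - 2 * (inner ℝ (y - x (t+1)) (x t - x (t+1)) : ℝ) + ‖x t - x (t+1)‖^2 := by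
      have he : (y - x (t+1)) - (x t - x (t+1)) = y - x t := by module
      rw [← he, norm_sub_sq_real]
    rw [real_inner_comm] at hpol
    -- combine: γ * ⟪d t, x(t+1) - y⟫ ≤ (‖y - x t‖² - ‖y - x(t+1)‖² - ‖x(t+1) - x t‖²)/2
    have hNrev : ‖x (t+1) - x t‖^2 = ‖x t - x (t+1)‖^2 := by rw [norm_sub_rev]
    have hIrev : (inner ℝ (d t) (x (t+1) - y) : ℝ) = - (inner ℝ (d t) (y - x (t+1)) : ℝ) := by
      rw [← inner_neg_right]; congr 1; module
    have hproj2 : γ * (inner ℝ (d t) (x (t+1) - y) : ℝ) ≤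
        (‖y - x t‖^2 - ‖y - x (t+1)‖^2 - ‖x (t+1) - x t‖^2)/2 := by
      rw [hIrev, hNrev]
      nlinarith [hpj, hpol]
    -- combine descent and convexity
    have hdd : (inner ℝ (Gφ (x t)) (x (t+1) - x t) : ℝ) - (inner ℝ (Gφ (x t)) (y - x t) : ℝ)
        = (inner ℝ (Gφ (x t)) (x (t+1) - y) : ℝ) := by
      rw [← inner_sub_right]; congr 1; module
    have hA : φ (x (t+1)) ≤ φ y + (inner ℝ (d t) (x (t+1) - y) : ℝ)
        + Lt/2 * ‖x (t+1) - x t‖^2 := by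
      have hdesc' : φ (x (t+1)) ≤ φ (x t) + (inner ℝ (Gφ (x t)) (x (t+1) - x t) : ℝ)
          + Lt/2 * ‖x (t+1) - x t‖^2 := hdesc
      have hconv' : φ (x t) + (inner ℝ (Gφ (x t)) (y - x t) : ℝ) ≤ φ y := hconv
      rw [hdt]
      linarith [hdesc', hconv', hdd]
    have hI : (inner ℝ (d t) (x (t+1) - y) : ℝ) ≤
        (‖y - x t‖^2 - ‖y - x (t+1)‖^2 - ‖x (t+1) - x t‖^2)/(2*γ) := by
      rw [le_div_iff₀ hγ2]
      nlinarith [hproj2]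
    -- step size condition
    have hLt2 : Lt + β^2 ≤ 1/γ := by
      have h1 := hCSc
      have h2 : (‖Q t‖ + C) * ‖Lg‖ ≤ (B + C) * ‖Lg‖ :=
        mul_le_mul_of_nonneg_right (by linarith) (norm_nonneg _)
      have h3 : (B + C) * ‖Lg‖ = 2 * ‖lam‖ * ‖Lg‖ + 2 * C * ‖Lg‖ + ‖Lg‖ * R / Real.sqrt γ := by
        rw [hB]; field_simp; ring
      rw [hLt]
      rw [hD] at hγcond
      linarith [h1, h2]
    -- constraint vector Lipschitz squared
    have hgsq : ‖gvec g (x (t+1)) - gvec g (x t)‖^2 ≤ β^2 * ‖x (t+1) - x t‖^2 := by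
      have h := hgLip (x (t+1)) hbt (x t) hat
      nlinarith [norm_nonneg (gvec g (x (t+1)) - gvec g (x t)), norm_nonneg (x (t+1) - x t)]
    have hN0 : (0:ℝ) ≤ ‖x (t+1) - x t‖^2 := sq_nonneg _
    have hbr : Lt * ‖x (t+1) - x t‖^2 + ‖gvec g (x (t+1)) - gvec g (x t)‖^2
        ≤ ‖x (t+1) - x t‖^2 / γ := by
      have h2 : (Lt + β^2) * ‖x (t+1) - x t‖^2 ≤ (1/γ) * ‖x (t+1) - x t‖^2 :=
        mul_le_mul_of_nonneg_right hLt2 hN0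
      have h3 : (1/γ) * ‖x (t+1) - x t‖^2 = ‖x (t+1) - x t‖^2 / γ := by ring
      nlinarith [hgsq]
    -- assembling
    have hdiv : (‖y - x t‖^2 - ‖y - x (t+1)‖^2 - ‖x (t+1) - x t‖^2)/(2*γ)
        = (‖y - x t‖^2 - ‖y - x (t+1)‖^2)/(2*γ) - (‖x (t+1) - x t‖^2/γ)/2 := by
      field_simp
    have hgd2 := hgdot (x t) (x (t+1))
    have hdr := hdrift t
    linarith [hA, hI, hbr, hdiv, hφb, hφy, hgd2, hdr]

  -- summed inequality
  have hsum : ∀ T : ℕ, (∀ τ, τ < T → ‖Q τ‖ ≤ B) →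
      ‖Q T‖^2/2 - ‖Q 0‖^2/2 + (∑ τ ∈ Finset.range T, f (x (τ+1))) ≤
        (T : ℝ) * f xstar + (‖xstar - x 0‖^2 - ‖xstar - x T‖^2)/(2*γ)
        + ‖gvec g (x T)‖^2/2 - ‖gvec g (x 0)‖^2/2 := by
    intro T hQBT
    have each : ∀ τ ∈ Finset.range T,
        (‖Q (τ+1)‖^2/2 - ‖Q τ‖^2/2) + f (x (τ+1)) ≤
          f xstar + (‖xstar - x τ‖^2 - ‖xstar - x (τ+1)‖^2)/(2*γ)
          + (‖gvec g (x (τ+1))‖^2/2 - ‖gvec g (x τ)‖^2/2) := by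
      intro τ hτ
      have hk := key τ (hQBT τ (Finset.mem_range.1 hτ)) xstar hxs
      have hneg : (∑ k, (Q τ k + g k (x τ)) * g k xstar) ≤ 0 :=
        Finset.sum_nonpos fun k _ =>
          mul_nonpos_of_nonneg_of_nonpos (hcnn τ k) (hxsFeas k)
      linarith
    have hs := Finset.sum_le_sum each
    have tele1 : (∑ τ ∈ Finset.range T, ((‖Q (τ+1)‖^2/2 - ‖Q τ‖^2/2) + f (x (τ+1))))
        = (‖Q T‖^2/2 - ‖Q 0‖^2/2) + ∑ τ ∈ Finset.range T, f (x (τ+1)) := by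
      rw [Finset.sum_add_distrib, Finset.sum_range_sub (fun τ => ‖Q τ‖^2/2)]
    have tele2 : (∑ τ ∈ Finset.range T, (‖xstar - x τ‖^2 - ‖xstar - x (τ+1)‖^2))
        = ‖xstar - x 0‖^2 - ‖xstar - x T‖^2 :=
      Finset.sum_range_sub' (fun τ => ‖xstar - x τ‖^2) T
    have tele3 : (∑ τ ∈ Finset.range T, (‖gvec g (x (τ+1))‖^2/2 - ‖gvec g (x τ)‖^2/2))
        = ‖gvec g (x T)‖^2/2 - ‖gvec g (x 0)‖^2/2 :=
      Finset.sum_range_sub (fun τ => ‖gvec g (x τ)‖^2/2) T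
    have hrhs : (∑ τ ∈ Finset.range T, (f xstar + (‖xstar - x τ‖^2 - ‖xstar - x (τ+1)‖^2)/(2*γ)
          + (‖gvec g (x (τ+1))‖^2/2 - ‖gvec g (x τ)‖^2/2)))
        = (T : ℝ) * f xstar + (‖xstar - x 0‖^2 - ‖xstar - x T‖^2)/(2*γ)
          + (‖gvec g (x T)‖^2/2 - ‖gvec g (x 0)‖^2/2) := by
      rw [Finset.sum_add_distrib, Finset.sum_add_distrib, Finset.sum_const, Finset.card_range,
        ← Finset.sum_div, tele2, tele3]
      simp [nsmul_eq_mul]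
    rw [tele1, hrhs] at hs
    linarith
  -- bound on the queue norm
  have hQB : ∀ t, ‖Q t‖ ≤ B := by
    intro t
    induction t using Nat.strong_induction_on with
    | _ t ih =>
      match t with
      | 0 =>
        have h2 : ‖gvec g (x 0)‖ ≤ C := hgC _ (hxX 0)
        have h4 : ‖Q 0‖ ≤ ‖gvec g (x 0)‖ := by
          nlinarith [hF0G0, norm_nonneg (Q 0), norm_nonneg (gvec g (x 0))]
        rw [hB]
        linarith [hΛ0, hS0]
      | (s+1) =>
        have hprev : ∀ τ, τ < s+1 → ‖Q τ‖ ≤ B := fun τ hτ => ih τ hτ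
        have H := hsum (s+1) hprev
        have hdual : ∀ τ ∈ Finset.range (s+1),
            f xstar - ∑ k, lam k * g k (x (τ+1)) ≤ f (x (τ+1)) := by
          intro τ _
          have hmem : f (x (τ+1)) + ∑ k, lam k * g k (x (τ+1)) ∈
              ((fun z => f z + ∑ k, lam k * g k z) '' X) :=
            Set.mem_image_of_mem _ (hxX (τ+1))
          have := hduality.1 hmem
          linarith
        have hs2 := Finset.sum_le_sum hdual
        rw [Finset.sum_sub_distrib, Finset.sum_const, Finset.card_range] at hs2
        rw [nsmul_eq_mul] at hs2
        have hlag : (∑ τ ∈ Finset.range (s+1), ∑ k, lam k * g k (x (τ+1)))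
            ≤ ‖lam‖ * ‖Q (s+1)‖ := by
          rw [Finset.sum_comm]
          have h1 : ∀ k : Fin m, (∑ τ ∈ Finset.range (s+1), lam k * g k (x (τ+1)))
              ≤ lam k * Q (s+1) k := by
            intro k
            rw [← Finset.mul_sum]
            have htel : (∑ τ ∈ Finset.range (s+1), g k (x (τ+1))) ≤ Q (s+1) k - Q 0 k := by
              have h2 : ∀ τ ∈ Finset.range (s+1), g k (x (τ+1)) ≤ Q (τ+1) k - Q τ k := by
                intro τ _; linarith [hQgrow τ k]
              have h3 := Finset.sum_le_sum h2
              rwa [Finset.sum_range_sub (fun τ => Q τ k)] at h3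
            have h4 : (∑ τ ∈ Finset.range (s+1), g k (x (τ+1))) ≤ Q (s+1) k := by
              have := hQnn 0 k; linarith
            exact mul_le_mul_of_nonneg_left h4 (hlam k)
          have h5 := Finset.sum_le_sum (fun k (_ : k ∈ Finset.univ) => h1 k)
          refine h5.trans ?_
          have h6 : (∑ k, lam k * Q (s+1) k) = (inner ℝ lam (Q (s+1)) : ℝ) := by
            simp [PiLp.inner_apply, RCLike.inner_apply, mul_comm]
          rw [h6]
          exact real_inner_le_norm _ _
        have hP0 : ‖xstar - x 0‖^2 ≤ R^2 := by
          have := hR xstar hxs (x 0) (hxX 0)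
          nlinarith [norm_nonneg (xstar - x 0)]
        have hPd : (‖xstar - x 0‖^2 - ‖xstar - x (s+1)‖^2)/(2*γ) ≤ R^2/(2*γ) := by
          have hb := sq_nonneg ‖xstar - x (s+1)‖
          gcongr
          linarith
        have hGt : ‖gvec g (x (s+1))‖^2 ≤ C^2 := by
          have := hgC (x (s+1)) (hxX (s+1))
          nlinarith [norm_nonneg (gvec g (x (s+1)))]
        have hq : ‖Q (s+1)‖^2/2 ≤ C^2/2 + R^2/(2*γ) + ‖lam‖ * ‖Q (s+1)‖ := by
          linarith [H, hs2, hlag, hF0G0, hP0, hPd, hGt]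
        have hq0 := norm_nonneg (Q (s+1))
        have hRS : R^2/(2*γ) = (R/Real.sqrt γ)^2/2 := by rw [hS2, div_div, mul_comm]
        rw [hRS] at hq
        rw [hB]
        nlinarith [hq, hq0, hΛ0, hC0, hS0, mul_nonneg hΛ0 hC0, mul_nonneg hΛ0 hS0,
          mul_nonneg hC0 hS0, sq_nonneg (‖Q (s+1)‖ - ‖lam‖),
          sq_nonneg (‖Q (s+1)‖ - ‖lam‖ - C - R/Real.sqrt γ)]
  -- final conclusion
  intro t ht
  obtain ⟨s, rfl⟩ : ∃ s : ℕ, t = s+1 := ⟨t-1, (Nat.succ_pred_eq_of_pos ht).symm⟩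
  have H := hsum (s+1) (fun τ _ => hQB τ)
  have hP0 : ‖xstar - x 0‖^2 ≤ R^2 := by
    have := hR xstar hxs (x 0) (hxX 0)
    nlinarith [norm_nonneg (xstar - x 0)]
  have hPd : (‖xstar - x 0‖^2 - ‖xstar - x (s+1)‖^2)/(2*γ) ≤ R^2/(2*γ) := by
    have hb := sq_nonneg ‖xstar - x (s+1)‖
    gcongr
    linarith
  have hGQ := hFtGt s
  have hfs : (∑ τ ∈ Finset.range (s+1), f (x (τ+1))) ≤ ((s+1 : ℕ) : ℝ) * f xstar + R^2/(2*γ) := by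
    linarith [H, hPd, hF0G0, hGQ]
  have htR : (0:ℝ) < ((s+1 : ℕ) : ℝ) := by positivity
  have hjen := hf.map_centerMass_le (t := Finset.range (s+1)) (w := fun _ => (1:ℝ))
      (p := fun τ => x (τ+1)) (fun i _ => zero_le_one) (by simpa using htR) (fun i _ => hxX (i+1))
  have hcm1 : (Finset.range (s+1)).centerMass (fun _ => (1:ℝ)) (fun τ => x (τ+1))
      = ((s+1 : ℕ) : ℝ)⁻¹ • ∑ τ ∈ Finset.range (s+1), x (τ+1) := by
    simp [Finset.centerMass]
  have hcm2 : (Finset.range (s+1)).centerMass (fun _ => (1:ℝ)) (f ∘ (fun τ => x (τ+1)))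
      = ((s+1 : ℕ) : ℝ)⁻¹ * ∑ τ ∈ Finset.range (s+1), f (x (τ+1)) := by
    simp [Finset.centerMass, Function.comp]
  rw [hcm1, hcm2] at hjen
  refine hjen.trans ?_
  have hmul : ((s+1 : ℕ) : ℝ)⁻¹ * (∑ τ ∈ Finset.range (s+1), f (x (τ+1)))
      ≤ ((s+1 : ℕ) : ℝ)⁻¹ * (((s+1 : ℕ) : ℝ) * f xstar + R^2/(2*γ)) :=
    mul_le_mul_of_nonneg_left hfs (by positivity)
  refine hmul.trans ?_
  rw [mul_add, ← mul_assoc, inv_mul_cancel₀ (ne_of_gt htR), one_mul, one_div]
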